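/- Let (X,T) be a dynamical system, let x ∈ X be a recurrent point, and let U ⊆ X be an open set with x ∈ U. Suppose there exists a homeomorphism J : X → X with J ∘ J = id_X, J ∘ T = T^{−1} ∘ J, and J(x) = x. Then the hitting time set N(x,U) is an SIP set. -/

import Mathlib

/-- `IP A`: the set of all finite sums of distinct elements of `A ⊆ ℤ`
(sums over finite subsets `F ⊆ A`, with the empty sum equal to `0`). -/
def IP (A : Set ℤ) : Set ℤ :=
  {t | ∃ F : Finset ℤ, ↑F ⊆ A ∧ t = ∑ x ∈ F, x}

/-- `SIP A = IP A - IP A`. -/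
def SIP (A : Set ℤ) : Set ℤ :=
  {d | ∃ s ∈ IP A, ∃ t ∈ IP A, d = s - t}

/-- The positive part `S_+ = S ∩ ℕ` of a set of integers. -/
def posPart (S : Set ℤ) : Set ℤ := S ∩ {n : ℤ | 0 < n}

/-- `B` (a set of positive integers) is an SIP set: there is an infinite set
`A` of positive integers with `SIP(A)_+ ⊆ B`. -/
def IsSIPSet (B : Set ℤ) : Prop :=
  ∃ A : Set ℤ, A ⊆ {n : ℤ | 0 < n} ∧ A.Infinite ∧ posPart (SIP A) ⊆ B

/-- `N(x,B) = {n ∈ ℕ : T^n(x) ∈ B}` (as a set of positive integers inside `ℤ`). -/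
def hittingPt {X : Type*} [TopologicalSpace X] (T : X ≃ₜ X) (x : X) (B : Set X) : Set ℤ :=
  {n : ℤ | 0 < n ∧ (⇑T)^[n.toNat] x ∈ B}

/-- `x` is a recurrent point: `x` lies in the closure of `{T^n(x) : n ∈ ℕ}`
(`ℕ = {1,2,3,...}`). -/
def IsRecurrentPt {X : Type*} [TopologicalSpace X] (T : X ≃ₜ X) (x : X) : Prop :=
  x ∈ closure {y : X | ∃ n : ℕ, 0 < n ∧ (⇑T)^[n] x = y}


section Aux

variable {X : Type*} [TopologicalSpace X]

private lemma zpow_apply_add (T : X ≃ₜ X) (s t : ℤ) (y : X) :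
    (T.toEquiv ^ (s + t)) y = (T.toEquiv ^ s) ((T.toEquiv ^ t) y) := by
  rw [zpow_add]; rfl

private lemma zpow_apply_neg_one (T : X ≃ₜ X) (y : X) :
    (T.toEquiv ^ (-1 : ℤ)) y = T.symm y := by
  rw [zpow_neg, zpow_one]; rfl

private lemma zpow_apply_natCast (T : X ≃ₜ X) (n : ℕ) (y : X) :
    (T.toEquiv ^ (n : ℤ)) y = (⇑T)^[n] y := by
  rw [zpow_natCast, ← Equiv.Perm.iterate_eq_pow]; rfl

private lemma contZpowAux (T : X ≃ₜ X) : ∀ n : ℤ, Continuous ⇑(T.toEquiv ^ n) := by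
  intro n
  induction n using Int.induction_on with
  | zero => simpa using continuous_id
  | succ k ih =>
    have h : ⇑(T.toEquiv ^ ((k : ℤ) + 1)) = ⇑(T.toEquiv ^ (k : ℤ)) ∘ ⇑T := by
      funext y; exact zpow_apply_add T k 1 y
    rw [h]; exact ih.comp T.continuous
  | pred k ih =>
    have h : ⇑(T.toEquiv ^ (-(k : ℤ) - 1)) = ⇑(T.toEquiv ^ (-(k : ℤ))) ∘ ⇑T.symm := by
      funext y
      rw [show (-(k : ℤ) - 1) = -(k : ℤ) + (-1) by ring, zpow_apply_add, zpow_apply_neg_one]; rfl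
    rw [h]; exact ih.comp T.symm.continuous

private lemma J_zpow (T J : X ≃ₜ X) (hJT : ∀ y, J (T y) = T.symm (J y)) :
    ∀ (n : ℤ) (y : X), J ((T.toEquiv ^ n) y) = (T.toEquiv ^ (-n)) (J y) := by
  have hJS : ∀ y, J (T.symm y) = T (J y) := by
    intro y
    have h1 := hJT (T.symm y)
    rw [Homeomorph.apply_symm_apply] at h1
    have h2 := congrArg T h1
    rw [Homeomorph.apply_symm_apply] at h2
    exact h2.symm
  have hTs : ∀ (s : ℤ) (y : X), (T.toEquiv ^ (s + 1)) y = (T.toEquiv ^ s) (T y) := by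
    intro s y; rw [zpow_apply_add, zpow_one]; rfl
  have hTs' : ∀ (s : ℤ) (y : X), (T.toEquiv ^ (s - 1)) y = (T.toEquiv ^ s) (T.symm y) := by
    intro s y
    rw [show s - 1 = s + (-1) by ring, zpow_apply_add, zpow_apply_neg_one]
  intro n
  induction n using Int.induction_on with
  | zero => intro y; simp
  | succ k ih =>
    intro y
    calc J ((T.toEquiv ^ ((k : ℤ) + 1)) y) = J ((T.toEquiv ^ (k : ℤ)) (T y)) := by rw [hTs]
      _ = (T.toEquiv ^ (-(k : ℤ))) (J (T y)) := ih _
      _ = (T.toEquiv ^ (-(k : ℤ))) (T.symm (J y)) := by rw [hJT]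
      _ = (T.toEquiv ^ (-((k : ℤ) + 1))) (J y) := by
          rw [show -((k : ℤ) + 1) = -(k : ℤ) - 1 by ring, hTs']
  | pred k ih =>
    intro y
    calc J ((T.toEquiv ^ (-(k : ℤ) - 1)) y) = J ((T.toEquiv ^ (-(k : ℤ))) (T.symm y)) := by
          rw [hTs']
      _ = (T.toEquiv ^ (-(-(k : ℤ)))) (J (T.symm y)) := ih _
      _ = (T.toEquiv ^ (k : ℤ)) (T (J y)) := by rw [neg_neg, hJS]
      _ = (T.toEquiv ^ (-(-(k : ℤ) - 1))) (J y) := by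
          rw [show -(-(k : ℤ) - 1) = (k : ℤ) + 1 by ring, hTs]

private lemma recur_gt {X : Type*} [TopologicalSpace X] [T1Space X] (T : X ≃ₜ X) (x : X)
    (hx : IsRecurrentPt T x) (W : Set X) (hW : IsOpen W) (hxW : x ∈ W) (M : ℕ) :
    ∃ n : ℕ, M < n ∧ (⇑T)^[n] x ∈ W := by
  by_cases hper : ∃ p, 0 < p ∧ (⇑T)^[p] x = x
  · obtain ⟨p, hp, hfix⟩ := hper
    refine ⟨p * (M + 1), ?_, ?_⟩
    · calc M < M + 1 := Nat.lt_succ_self M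
        _ ≤ p * (M + 1) := Nat.le_mul_of_pos_left _ hp
    · rw [Function.iterate_mul, Function.iterate_fixed hfix]; exact hxW
  · push_neg at hper
    classical
    set C : Finset X := (Finset.Icc 1 M).image (fun n => (⇑T)^[n] x) with hC
    have hopen : IsOpen (W \ ↑C) := hW.sdiff C.finite_toSet.isClosed
    have hxW' : x ∈ W \ ↑C := by
      refine ⟨hxW, fun hxC => ?_⟩
      simp only [hC, Finset.coe_image, Set.mem_image, Finset.mem_coe, Finset.mem_Icc] at hxC
      obtain ⟨n, ⟨hn1, _⟩, hfix⟩ := hxC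
      exact hper n hn1 hfix
    have hcl := hx
    rw [IsRecurrentPt, mem_closure_iff] at hcl
    obtain ⟨y, hyW', n, hn, rfl⟩ := hcl _ hopen hxW'
    refine ⟨n, ?_, hyW'.1⟩
    by_contra h
    push_neg at h
    refine hyW'.2 ?_
    simp only [hC, Finset.coe_image, Set.mem_image, Finset.mem_coe, Finset.mem_Icc]
    exact ⟨n, ⟨hn, h⟩, rfl⟩

private lemma exists_chain {St : Sort*} (Q : St → St → Prop) (p0 : St)
    (key : ∀ p, ∃ q, Q p q) : ∃ f : ℕ → St, f 0 = p0 ∧ ∀ k, Q (f k) (f (k + 1)) := by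
  choose step hstep using key
  exact ⟨fun k => Nat.rec p0 (fun _ p => step p) k, rfl, fun k => hstep _⟩

end Aux

/-- if `x` is a recurrent point of `(X,T)`, `U` is an open set
containing `x`, and there is a homeomorphism `J` with `J ∘ J = id`,
`J ∘ T = T⁻¹ ∘ J` and `J(x) = x`, then `N(x,U)` is an SIP set. -/
theorem hittingPt_isSIPSet_of_recurrent_symm {X : Type*} [MetricSpace X] [CompactSpace X]
    (T : X ≃ₜ X) (x : X) (hx : IsRecurrentPt T x)
    (U : Set X) (hU : IsOpen U) (hxU : x ∈ U)
    (J : X ≃ₜ X) (hJinv : ∀ y, J (J y) = y)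
    (hJT : ∀ y, J (T y) = T.symm (J y)) (hJx : J x = x) :
    IsSIPSet (hittingPt T x U) := by
  classical
  have hJz := J_zpow T J hJT
  let St := {p : ℤ × Set X // IsOpen p.2 ∧ x ∈ p.2 ∧ ∀ y, y ∈ p.2 ↔ J y ∈ p.2}
  let Q : St → St → Prop := fun p q =>
    p.1.1 < q.1.1 ∧ 0 < q.1.1 ∧ q.1.2 ⊆ p.1.2 ∧
      ∀ y ∈ q.1.2, (T.toEquiv ^ q.1.1) y ∈ p.1.2 ∧ (T.toEquiv ^ (-q.1.1)) y ∈ p.1.2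
  have hp0inv : IsOpen (U ∩ ⇑J ⁻¹' U) ∧ x ∈ U ∩ ⇑J ⁻¹' U ∧
      ∀ y, y ∈ U ∩ ⇑J ⁻¹' U ↔ J y ∈ U ∩ ⇑J ⁻¹' U := by
    refine ⟨hU.inter (hU.preimage J.continuous), ⟨hxU, by
      simp only [Set.mem_preimage, hJx]; exact hxU⟩, fun y => ?_⟩
    simp only [Set.mem_inter_iff, Set.mem_preimage, hJinv y]
    tauto
  let p0 : St := ⟨(0, U ∩ ⇑J ⁻¹' U), hp0inv⟩
  have key : ∀ p : St, ∃ q : St, Q p q := by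
    rintro ⟨⟨m, V⟩, hVo, hxV, hVs⟩
    obtain ⟨n, hnM, hTn0⟩ := recur_gt T x hx V hVo hxV m.toNat
    have hN0 : 0 < (n : ℤ) := Int.natCast_pos.mpr (by omega)
    have hNm : m < (n : ℤ) := by
      have h1 : m ≤ (m.toNat : ℤ) := Int.self_le_toNat m
      have h2 : ((m.toNat : ℕ) : ℤ) < (n : ℤ) := by exact_mod_cast hnM
      omega
    have hTn : (T.toEquiv ^ (n : ℤ)) x ∈ V := by rw [zpow_apply_natCast]; exact hTn0
    have hTn' : (T.toEquiv ^ (-(n : ℤ))) x ∈ V := by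
      have h := hJz (n : ℤ) x
      rw [hJx] at h
      rw [← h]
      exact (hVs _).mp hTn
    set W0 : Set X :=
      V ∩ ⇑(T.toEquiv ^ (n : ℤ)) ⁻¹' V ∩ ⇑(T.toEquiv ^ (-(n : ℤ))) ⁻¹' V with hW0def
    have hW0o : IsOpen W0 :=
      (hVo.inter (hVo.preimage (contZpowAux T _))).inter (hVo.preimage (contZpowAux T _))
    have hxW0 : x ∈ W0 := ⟨⟨hxV, hTn⟩, hTn'⟩
    set W : Set X := W0 ∩ ⇑J ⁻¹' W0 with hWdef
    have hWo : IsOpen W := hW0o.inter (hW0o.preimage J.continuous)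
    have hxW : x ∈ W := ⟨hxW0, by simp only [Set.mem_preimage, hJx]; exact hxW0⟩
    have hWs : ∀ y, y ∈ W ↔ J y ∈ W := by
      intro y
      simp only [hWdef, Set.mem_inter_iff, Set.mem_preimage, hJinv y]
      tauto
    exact ⟨⟨((n : ℤ), W), hWo, hxW, hWs⟩, hNm, hN0, fun y hy => hy.1.1.1,
      fun y hy => ⟨hy.1.1.2, hy.1.2⟩⟩
  obtain ⟨f, hf0, hf⟩ := exists_chain Q p0 key
  have hxV : ∀ k, x ∈ (f k).1.2 := fun k => (f k).2.2.1
  have hgmono : StrictMono fun k => (f k).1.1 := strictMono_nat_of_lt_succ fun k => (hf k).1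
  have hVanti : Antitone fun k => (f k).1.2 := antitone_nat_of_succ_le fun k => (hf k).2.2.1
  have hapos : ∀ k, 0 < (f (k + 1)).1.1 := fun k => (hf k).2.1
  have hmap : ∀ k, ∀ y ∈ (f (k + 1)).1.2,
      (T.toEquiv ^ (f (k + 1)).1.1) y ∈ (f k).1.2 ∧
      (T.toEquiv ^ (-(f (k + 1)).1.1)) y ∈ (f k).1.2 := fun k => (hf k).2.2.2
  let a : ℕ → ℤ := fun k => (f (k + 1)).1.1
  have hamono : StrictMono a := fun i j h => hgmono (Nat.succ_lt_succ h)
  have hainj : Function.Injective a := hamono.injective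
  have claim : ∀ (n : ℕ) (F G : Finset ℕ), (F ∪ G).card = n → Disjoint F G →
      ∀ j : ℕ, (∀ l ∈ F ∪ G, j ≤ l) →
      (T.toEquiv ^ (∑ l ∈ F, a l - ∑ l ∈ G, a l)) x ∈ (f j).1.2 := by
    intro n
    induction n with
    | zero =>
      intro F G hcard _ j _
      obtain ⟨hF, hG⟩ := Finset.union_eq_empty.mp (Finset.card_eq_zero.mp hcard)
      subst hF; subst hG
      simpa using hxV j
    | succ n ih =>
      intro F G hcard hdisj j hj
      have hne : (F ∪ G).Nonempty := Finset.card_pos.mp (by omega)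
      set i0 := (F ∪ G).min' hne with hi0def
      have hiFG : i0 ∈ F ∪ G := Finset.min'_mem _ _
      have hji : j ≤ i0 := hj i0 hiFG
      have hmin : ∀ l ∈ F ∪ G, i0 ≤ l := fun l hl => Finset.min'_le _ _ hl
      rcases Finset.mem_union.mp hiFG with hiF | hiG
      · have hiG : i0 ∉ G := fun h => Finset.disjoint_left.mp hdisj hiF h
        have hunion : F.erase i0 ∪ G = (F ∪ G).erase i0 := by
          rw [Finset.erase_union_distrib, Finset.erase_eq_of_notMem hiG]
        have hcard' : (F.erase i0 ∪ G).card = n := by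
          rw [hunion, Finset.card_erase_of_mem hiFG, hcard]; omega
        have hdisj' : Disjoint (F.erase i0) G := hdisj.mono_left (Finset.erase_subset _ _)
        have hsub : ∀ l ∈ F.erase i0 ∪ G, i0 + 1 ≤ l := by
          intro l hl
          rw [hunion, Finset.mem_erase] at hl
          have := hmin l hl.2
          omega
        have hz := ih (F.erase i0) G hcard' hdisj' (i0 + 1) hsub
        have hsum : ∑ l ∈ F, a l - ∑ l ∈ G, a l
            = a i0 + (∑ l ∈ F.erase i0, a l - ∑ l ∈ G, a l) := by
          rw [← Finset.add_sum_erase _ _ hiF]; ring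
        rw [hsum, zpow_apply_add]
        exact hVanti hji ((hmap i0 _ hz).1)
      · have hiF : i0 ∉ F := fun h => Finset.disjoint_right.mp hdisj hiG h
        have hunion : F ∪ G.erase i0 = (F ∪ G).erase i0 := by
          rw [Finset.erase_union_distrib, Finset.erase_eq_of_notMem hiF]
        have hcard' : (F ∪ G.erase i0).card = n := by
          rw [hunion, Finset.card_erase_of_mem hiFG, hcard]; omega
        have hdisj' : Disjoint F (G.erase i0) := hdisj.mono_right (Finset.erase_subset _ _)
        have hsub : ∀ l ∈ F ∪ G.erase i0, i0 + 1 ≤ l := by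
          intro l hl
          rw [hunion, Finset.mem_erase] at hl
          have := hmin l hl.2
          omega
        have hz := ih F (G.erase i0) hcard' hdisj' (i0 + 1) hsub
        have hsum : ∑ l ∈ F, a l - ∑ l ∈ G, a l
            = -(a i0) + (∑ l ∈ F, a l - ∑ l ∈ G.erase i0, a l) := by
          rw [← Finset.add_sum_erase _ _ hiG]; ring
        rw [hsum, zpow_apply_add]
        exact hVanti hji ((hmap i0 _ hz).2)
  refine ⟨Set.range a, ?_, Set.infinite_range_of_injective hainj, ?_⟩
  · rintro z ⟨k, rfl⟩
    exact hapos k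
  · intro d hd
    obtain ⟨⟨s, hs, t, ht, rfl⟩, hdpos⟩ := hd
    obtain ⟨Fs, hFs, rfl⟩ := hs
    obtain ⟨Gs, hGs, rfl⟩ := ht
    have hdpos' : (0 : ℤ) < ∑ y ∈ Fs, y - ∑ y ∈ Gs, y := hdpos
    set F : Finset ℕ := Fs.preimage a hainj.injOn with hFdef
    set G : Finset ℕ := Gs.preimage a hainj.injOn with hGdef
    have hFsum : ∑ l ∈ F, a l = ∑ y ∈ Fs, y :=
      Finset.sum_preimage a Fs hainj.injOn (fun y => y) (fun y hy h => absurd (hFs hy) h)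
    have hGsum : ∑ l ∈ G, a l = ∑ y ∈ Gs, y :=
      Finset.sum_preimage a Gs hainj.injOn (fun y => y) (fun y hy h => absurd (hGs hy) h)
    have hsd : ∑ y ∈ Fs, y - ∑ y ∈ Gs, y = ∑ l ∈ F \ G, a l - ∑ l ∈ G \ F, a l := by
      rw [← hFsum, ← hGsum]
      have h1 : ∑ l ∈ F \ (F ∩ G), a l + ∑ l ∈ F ∩ G, a l = ∑ l ∈ F, a l :=
        Finset.sum_sdiff Finset.inter_subset_left
      have h2 : ∑ l ∈ G \ (G ∩ F), a l + ∑ l ∈ G ∩ F, a l = ∑ l ∈ G, a l :=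
        Finset.sum_sdiff Finset.inter_subset_left
      rw [Finset.sdiff_inter_self_left] at h1 h2
      rw [Finset.inter_comm] at h2
      omega
    have hmem := claim _ (F \ G) (G \ F) rfl disjoint_sdiff_sdiff 0 (fun l _ => Nat.zero_le l)
    refine ⟨?_, ?_⟩
    · exact hdpos
    · have h1 : (T.toEquiv ^ (∑ y ∈ Fs, y - ∑ y ∈ Gs, y)) x ∈ U := by
        rw [hsd]
        have hsubU : (f 0).1.2 ⊆ U := by rw [hf0]; exact fun y hy => hy.1
        exact hsubU hmem
      rw [show (∑ y ∈ Fs, y - ∑ y ∈ Gs, y)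
          = (((∑ y ∈ Fs, y - ∑ y ∈ Gs, y).toNat : ℕ) : ℤ)
          from (Int.toNat_of_nonneg hdpos'.le).symm] at h1
      rw [zpow_apply_natCast] at h1
      exact h1
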